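/- For |q| < 1, ψ(q) := ∑_{n=0}^{∞} q^{n(n+1)/2} equals ∏_{k=0}^{∞} (1 − q^{2k+2}) / (1 − q^{2k+1}). -/

import Mathlib

open Finset Complex Filter Topology

namespace PsiAux

/-- `T n = n (n-1) / 2`. -/
def T : ℕ → ℕ
  | 0 => 0
  | n+1 => T n + n

lemma two_T (n : ℕ) : (T n : ℤ) * 2 = n * (n - 1) := by
  induction n with
  | zero => rfl
  | succ n ih => show ((T n + n : ℕ) : ℤ) * 2 = _; push_cast at ih ⊢; ring_nf; ring_nf at ih; linarith

lemma two_T' (n : ℕ) : 2 * T (n + 1) = n * (n + 1) := by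
  have h := two_T (n+1)
  have h2 : ((2 * T (n+1) : ℕ) : ℤ) = ((n * (n+1) : ℕ) : ℤ) := by push_cast at h ⊢; push_cast; linarith
  exact_mod_cast h2

lemma tri_eq (n : ℕ) : n * (n + 1) / 2 = T (n + 1) := by
  have h := two_T' n
  omega

/-- partial q-Pochhammer -/
def P (x : ℂ) (n : ℕ) : ℂ := ∏ i ∈ range n, (1 - x ^ (i+1))

/-- Gaussian binomial coefficient, as a function of `x`. -/
def qb (x : ℂ) : ℕ → ℕ → ℂ
  | 0, 0 => 1
  | 0, _+1 => 0
  | _+1, 0 => 1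
  | m+1, n+1 => qb x m (n+1) + x ^ (m - n) * qb x m n

variable {x z : ℂ}

lemma qb_zero (m : ℕ) : qb x m 0 = 1 := by cases m <;> rfl

lemma qb_of_lt : ∀ {m n : ℕ}, m < n → qb x m n = 0
  | 0, n+1, _ => rfl
  | m+1, n+1, h => by
      show qb x m (n+1) + x ^ (m - n) * qb x m n = 0
      rw [qb_of_lt (by omega), qb_of_lt (by omega)]; ring

lemma qb_self (m : ℕ) : qb x m m = 1 := by
  induction m with
  | zero => rfl
  | succ m ih =>
      show qb x m (m+1) + x ^ (m - m) * qb x m m = 1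
      rw [qb_of_lt (by omega), ih]; simp

lemma rothe (x z : ℂ) (M : ℕ) :
    ∏ k ∈ range M, (1 + z * x ^ k) = ∑ n ∈ range (M+1), qb x M n * x ^ T n * z ^ n := by
  induction M with
  | zero => simp [qb, T]
  | succ M ih =>
      rw [prod_range_succ, ih, Finset.sum_range_succ' (f := fun n => qb x (M+1) n * x ^ T n * z ^ n)]
      have key : ∀ n ∈ range (M+1), qb x (M+1) (n+1) * x ^ T (n+1) * z ^ (n+1)
          = qb x M (n+1) * x ^ T (n+1) * z ^ (n+1)
            + (qb x M n * x ^ T n * z ^ n) * (z * x ^ M) := by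
        intro n hn
        have hn' : n ≤ M := by simpa using Nat.lt_succ_iff.mp (mem_range.mp hn)
        show (qb x M (n+1) + x ^ (M - n) * qb x M n) * x ^ T (n+1) * z ^ (n+1) = _
        have hxp : x ^ (M - n) * x ^ T (n+1) = x ^ T n * x ^ M := by
          rw [← pow_add, ← pow_add]
          congr 1
          show M - n + (T n + n) = T n + M
          omega
        calc (qb x M (n+1) + x ^ (M - n) * qb x M n) * x ^ T (n+1) * z ^ (n+1)
            = qb x M (n+1) * x ^ T (n+1) * z ^ (n+1)
              + qb x M n * (x ^ (M-n) * x ^ T (n+1)) * z ^ (n+1) := by ring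
          _ = _ := by rw [hxp]; ring
      rw [Finset.sum_congr rfl key, Finset.sum_add_distrib]
      have h1 : ∑ n ∈ range (M+1), qb x M (n+1) * x ^ T (n+1) * z ^ (n+1) + qb x (M+1) 0 * x ^ T 0 * z ^ 0
          = ∑ n ∈ range (M+1), qb x M n * x ^ T n * z ^ n := by
        rw [qb_zero]
        have h3 := (Finset.sum_range_succ' (f := fun n => qb x M n * x ^ T n * z ^ n) (n := M+1)).symm
        rw [qb_zero] at h3
        rw [h3, Finset.sum_range_succ, qb_of_lt (Nat.lt_succ_self M)]
        simp
      have h2 : ∑ n ∈ range (M+1), (qb x M n * x ^ T n * z ^ n) * (z * x ^ M)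
          = (∑ n ∈ range (M+1), qb x M n * x ^ T n * z ^ n) * (z * x ^ M) := by
        rw [Finset.sum_mul]
      linear_combination -h1 - h2

lemma P_succ (n : ℕ) : P x (n+1) = P x n * (1 - x ^ (n+1)) := Finset.prod_range_succ _ _

lemma qb_mul : ∀ m n : ℕ, n ≤ m → qb x m n * (P x n * P x (m - n)) = P x m := by
  intro m
  induction m with
  | zero => intro n hn; interval_cases n; simp [qb, P]
  | succ m ih =>
      intro n hn
      match n with
      | 0 => simp [qb_zero, P]
      | n+1 =>
        rcases Nat.lt_or_ge n m with h | h
        · -- n+1 ≤ m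
          obtain ⟨d, rfl⟩ : ∃ d, m = n + 1 + d := ⟨m - (n+1), by omega⟩
          have e1 : n + 1 + d - (n+1) = d := by omega
          have e2 : n + 1 + d - n = d + 1 := by omega
          have e3 : n + 1 + d + 1 - (n + 1) = d + 1 := by omega
          show (qb x (n+1+d) (n+1) + x ^ (n+1+d-n) * qb x (n+1+d) n) *
              (P x (n+1) * P x (n+1+d+1-(n+1))) = P x (n+1+d+1)
          rw [e2, e3]
          have ih1 := ih (n+1) (by omega)
          rw [e1] at ih1
          have ih2 := ih n (by omega)
          rw [e2] at ih2
          rw [P_succ (n+1+d), P_succ d, P_succ n]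
          rw [P_succ n] at ih1
          rw [P_succ d] at ih2
          linear_combination (1 - x^(d+1)) * ih1 + (x^(d+1) * (1 - x^(n+1))) * ih2
        · -- n = m
          have hnm : n = m := by omega
          subst hnm
          show (qb x n (n+1) + x ^ (n - n) * qb x n n) * (P x (n+1) * P x (n + 1 - (n+1))) = P x (n+1)
          rw [qb_of_lt (by omega), qb_self]
          simp [P]

/-! ## Analytic toolkit -/

lemma one_add_ne {w : ℂ} (h : ‖w‖ < 1) : 1 + w ≠ 0 := by
  intro hc
  have : w = -1 := by linear_combination hc
  rw [this] at h; simp at h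

/-- basic package: products of `1 + a k` with summable `a`. -/
lemma nice {a : ℕ → ℂ} (h0 : ∀ k, 1 + a k ≠ 0) (hs : Summable fun k => ‖a k‖) :
    HasProd (fun k => 1 + a k) (∏' k, (1 + a k)) ∧ (∏' k, (1 + a k)) ≠ 0 := by
  have hlog : Summable fun k => Complex.log (1 + a k) := by
    apply Summable.of_norm_bounded_eventually_nat (g := fun k => 3/2 * ‖a k‖) (hs.mul_left _)
    have h2 : ∀ᶠ k in atTop, ‖a k‖ ≤ 1/2 := by
      filter_upwards [hs.tendsto_atTop_zero.eventually_lt_const (show (0:ℝ) < 1/2 by norm_num)]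
        with k hk using hk.le
    filter_upwards [h2] with k hk using Complex.norm_log_one_add_half_le_self hk
  constructor
  · exact (Complex.multipliable_of_summable_log hlog).hasProd
  · have hh : Complex.exp (∑' k, Complex.log (1 + a k)) = ∏' k, (1 + a k) :=
      Complex.cexp_tsum_eq_tprod h0 hlog
    rw [← hh]
    exact Complex.exp_ne_zero _

variable {q : ℂ}

lemma nice_pm (hq1 : ‖q‖ < 1) (ε : ℂ) (hε : ‖ε‖ = 1) (g : ℕ → ℕ) (hg : ∀ k, k + 1 ≤ g k) :
    HasProd (fun k => 1 + ε * q ^ g k) (∏' k, (1 + ε * q ^ g k)) ∧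
      (∏' k, (1 + ε * q ^ g k)) ≠ 0 := by
  apply nice
  · intro k
    apply one_add_ne
    rw [norm_mul, hε, one_mul, norm_pow]
    exact pow_lt_one₀ (norm_nonneg q) hq1 (by have := hg k; omega)
  · have hb : ∀ k, ‖ε * q ^ g k‖ ≤ ‖q‖ ^ k := by
      intro k
      rw [norm_mul, hε, one_mul, norm_pow]
      exact pow_le_pow_of_le_one (norm_nonneg q) hq1.le (by have := hg k; omega)
    exact Summable.of_nonneg_of_le (fun k => norm_nonneg _) hb
      (summable_geometric_of_lt_one (norm_nonneg q) hq1)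

lemma nice_sub (hq1 : ‖q‖ < 1) (g : ℕ → ℕ) (hg : ∀ k, k + 1 ≤ g k) :
    HasProd (fun k => 1 - q ^ g k) (∏' k, (1 - q ^ g k)) ∧ (∏' k, (1 - q ^ g k)) ≠ 0 := by
  have h := nice_pm hq1 (-1) (by simp) g hg
  have he : (fun k => 1 + (-1) * q ^ g k) = (fun k => 1 - q ^ g k) := by
    funext k; ring
  rwa [he] at h

lemma nice_add (hq1 : ‖q‖ < 1) (g : ℕ → ℕ) (hg : ∀ k, k + 1 ≤ g k) :
    HasProd (fun k => 1 + q ^ g k) (∏' k, (1 + q ^ g k)) ∧ (∏' k, (1 + q ^ g k)) ≠ 0 := by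
  have h := nice_pm hq1 1 (by simp) g hg
  simpa using h

/-! ## Real product bounds -/

lemma summable_pow_succ {x : ℝ} (h0 : 0 ≤ x) (h1 : x < 1) : Summable (fun n : ℕ => x ^ (n+1)) := by
  have := (summable_geometric_of_lt_one h0 h1).mul_right x
  apply this.congr
  intro n
  rw [← pow_succ]

lemma real_lower {x : ℝ} (h0 : 0 ≤ x) (h1 : x < 1) :
    ∃ L : ℝ, 0 < L ∧ ∀ N, L ≤ ∏ i ∈ range N, (1 - x ^ (i+1)) := by
  have hpos : ∀ i : ℕ, (0:ℝ) < 1 - x ^ (i+1) := fun i =>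
    sub_pos.mpr (pow_lt_one₀ h0 h1 (Nat.succ_ne_zero i))
  have hlog : Summable fun n => Real.log (1 - x ^ (n+1)) := by
    apply Summable.of_norm_bounded (g := fun n => x ^ (n+1) * (1-x)⁻¹)
      ((summable_pow_succ h0 h1).mul_right _)
    intro n
    have ht : x ^ (n+1) ≤ x := pow_le_of_le_one h0 h1.le (Nat.succ_ne_zero n)
    have h2 : (0:ℝ) < 1 - x ^ (n+1) := hpos n
    have h3 : (0:ℝ) < 1 - x := by linarith
    rw [Real.norm_eq_abs, abs_of_nonpos (Real.log_nonpos (by linarith) (by nlinarith [pow_nonneg h0 (n+1)]))]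
    rw [← Real.log_inv]
    have h4 := Real.log_le_sub_one_of_pos (inv_pos.mpr h2)
    have h5 : (1 - x ^ (n+1))⁻¹ - 1 ≤ x ^ (n+1) * (1-x)⁻¹ := by
      rw [inv_eq_one_div, div_sub' h2.ne']
      rw [div_le_iff₀ h2]
      have : x ^ (n+1) * (1-x)⁻¹ * (1 - x ^ (n+1)) = x^(n+1) * ((1 - x^(n+1)) * (1-x)⁻¹) := by ring
      rw [this]
      have h6 : (1:ℝ) ≤ (1 - x^(n+1)) * (1-x)⁻¹ := by
        rw [le_mul_inv_iff₀ h3]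
        linarith
      nlinarith [pow_nonneg h0 (n+1)]
    linarith
  have hprod : HasProd (fun n : ℕ => 1 - x ^ (n+1)) (∏' n : ℕ, (1 - x ^ (n+1))) :=
    (Real.multipliable_of_summable_log hpos hlog).hasProd
  refine ⟨∏' n : ℕ, (1 - x ^ (n+1)), ?_, ?_⟩
  · have hh : Real.exp (∑' n : ℕ, Real.log (1 - x ^ (n+1))) = ∏' n : ℕ, (1 - x ^ (n+1)) :=
      Real.rexp_tsum_eq_tprod hpos hlog
    rw [← hh]
    exact Real.exp_pos _
  · intro N
    have hanti : Antitone (fun N => ∏ i ∈ range N, (1 - x ^ (i+1))) := by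
      apply antitone_nat_of_succ_le
      intro n
      rw [prod_range_succ]
      have hp : (0:ℝ) ≤ ∏ i ∈ range n, (1 - x ^ (i+1)) :=
        Finset.prod_nonneg fun i _ => (hpos i).le
      nlinarith [pow_nonneg h0 (n+1), hpos n]
    exact hanti.le_of_tendsto hprod.tendsto_prod_nat N

lemma real_upper {x : ℝ} (h0 : 0 ≤ x) (h1 : x < 1) :
    ∃ U : ℝ, ∀ N, ∏ i ∈ range N, (1 + x ^ (i+1)) ≤ U := by
  have hpos : ∀ i : ℕ, (0:ℝ) < 1 + x ^ (i+1) := fun i => by nlinarith [pow_nonneg h0 (i+1)]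
  have hlog : Summable fun n => Real.log (1 + x ^ (n+1)) := by
    apply Summable.of_norm_bounded (g := fun n => x ^ (n+1)) (summable_pow_succ h0 h1)
    intro n
    rw [Real.norm_eq_abs, _root_.abs_of_nonneg (Real.log_nonneg (by nlinarith [pow_nonneg h0 (n+1)]))]
    have := Real.log_le_sub_one_of_pos (hpos n)
    linarith
  have hprod : HasProd (fun n : ℕ => 1 + x ^ (n+1)) (∏' n : ℕ, (1 + x ^ (n+1))) :=
    (Real.multipliable_of_summable_log hpos hlog).hasProd
  refine ⟨∏' n : ℕ, (1 + x ^ (n+1)), fun N => ?_⟩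
  have hmono : Monotone (fun N => ∏ i ∈ range N, (1 + x ^ (i+1))) := by
    apply monotone_nat_of_le_succ
    intro n
    rw [prod_range_succ]
    have hp : (0:ℝ) ≤ ∏ i ∈ range n, (1 + x ^ (i+1)) :=
      Finset.prod_nonneg fun i _ => (hpos i).le
    nlinarith [pow_nonneg h0 (n+1)]
  exact hmono.ge_of_tendsto hprod.tendsto_prod_nat N

/-! ## Bounds on the partial Pochhammer products and Gaussian binomials -/

section Pbounds

variable {w : ℂ}

lemma norm_P_le (N : ℕ) : ‖P w N‖ ≤ ∏ i ∈ range N, (1 + ‖w‖ ^ (i+1)) := by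
  rw [P, norm_prod]
  apply Finset.prod_le_prod (fun i _ => norm_nonneg _)
  intro i _
  calc ‖1 - w ^ (i+1)‖ ≤ ‖(1:ℂ)‖ + ‖w ^ (i+1)‖ := norm_sub_le _ _
    _ = 1 + ‖w‖ ^ (i+1) := by rw [norm_one, norm_pow]

lemma le_norm_P (hw : ‖w‖ < 1) (N : ℕ) : (∏ i ∈ range N, (1 - ‖w‖ ^ (i+1))) ≤ ‖P w N‖ := by
  rw [P, norm_prod]
  apply Finset.prod_le_prod
  · intro i _
    have : ‖w‖ ^ (i+1) < 1 := pow_lt_one₀ (norm_nonneg w) hw (Nat.succ_ne_zero i)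
    linarith
  · intro i _
    calc 1 - ‖w‖ ^ (i+1) = ‖(1:ℂ)‖ - ‖w ^ (i+1)‖ := by rw [norm_one, norm_pow]
      _ ≤ ‖1 - w ^ (i+1)‖ := norm_sub_norm_le _ _

/-- There is a uniform bound for all Gaussian binomial coefficients. -/
lemma qb_bound (hw : ‖w‖ < 1) : ∃ K : ℝ, ∀ m k : ℕ, k ≤ m → ‖qb w m k‖ ≤ K := by
  obtain ⟨L, hL, hLle⟩ := real_lower (norm_nonneg w) hw
  obtain ⟨U, hU⟩ := real_upper (norm_nonneg w) hw
  refine ⟨U / (L * L), ?_⟩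
  intro m k hk
  have hmul := qb_mul (x := w) m k hk
  have h1 : ‖qb w m k‖ * (‖P w k‖ * ‖P w (m - k)‖) = ‖P w m‖ := by
    rw [← norm_mul, ← norm_mul, hmul]
  have h2 : L * L ≤ ‖P w k‖ * ‖P w (m-k)‖ := by
    apply mul_le_mul ((hLle k).trans (le_norm_P hw k)) ((hLle (m-k)).trans (le_norm_P hw (m-k)))
      hL.le (norm_nonneg _)
  have h3 : ‖P w m‖ ≤ U := (norm_P_le m).trans (hU m)
  rw [le_div_iff₀ (by positivity)]
  calc ‖qb w m k‖ * (L * L) ≤ ‖qb w m k‖ * (‖P w k‖ * ‖P w (m-k)‖) :=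
        mul_le_mul_of_nonneg_left h2 (norm_nonneg _)
    _ = ‖P w m‖ := h1
    _ ≤ U := h3

lemma P_ne_zero (hw : ‖w‖ < 1) (N : ℕ) : P w N ≠ 0 := by
  obtain ⟨L, hL, hLle⟩ := real_lower (norm_nonneg w) hw
  have := (hLle N).trans (le_norm_P hw N)
  intro hc
  rw [hc] at this
  simp at this
  linarith

lemma P_tendsto (hw : ‖w‖ < 1) :
    Tendsto (fun N => P w N) atTop (𝓝 (∏' i : ℕ, (1 - w ^ (i+1)))) ∧
      (∏' i : ℕ, (1 - w ^ (i+1))) ≠ 0 := by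
  have h := nice_sub hw (fun i => i + 1) (fun i => le_refl _)
  exact ⟨h.1.tendsto_prod_nat, h.2⟩

end Pbounds

/-! ## The limit of Gaussian binomials -/

lemma qb_tendsto {w : ℂ} (hw : ‖w‖ < 1) (r : ℤ) :
    Tendsto (fun m : ℕ => qb w (2*m) ((↑m + r).toNat)) atTop
      (𝓝 (∏' i : ℕ, (1 - w ^ (i+1)))⁻¹) := by
  obtain ⟨hP, hPne⟩ := P_tendsto hw
  set Pinf := ∏' i : ℕ, (1 - w ^ (i+1)) with hPinf
  have h2m : Tendsto (fun m : ℕ => P w (2*m)) atTop (𝓝 Pinf) :=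
    hP.comp (tendsto_atTop_atTop.mpr fun b => ⟨b, fun m hm => by omega⟩)
  have hplus : Tendsto (fun m : ℕ => P w ((↑m + r).toNat)) atTop (𝓝 Pinf) :=
    hP.comp (tendsto_atTop_atTop.mpr fun b => ⟨b + r.natAbs, fun m hm => by omega⟩)
  have hminus : Tendsto (fun m : ℕ => P w ((↑m - r).toNat)) atTop (𝓝 Pinf) :=
    hP.comp (tendsto_atTop_atTop.mpr fun b => ⟨b + r.natAbs, fun m hm => by omega⟩)
  have hlim : Tendsto (fun m : ℕ => P w (2*m) / (P w ((↑m + r).toNat) * P w ((↑m - r).toNat)))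
      atTop (𝓝 (Pinf / (Pinf * Pinf))) :=
    h2m.div (hplus.mul hminus) (by simp [hPne])
  have heq : ∀ᶠ m : ℕ in atTop, P w (2*m) / (P w ((↑m + r).toNat) * P w ((↑m - r).toNat))
      = qb w (2*m) ((↑m + r).toNat) := by
    filter_upwards [eventually_ge_atTop r.natAbs] with m hm
    have hk : (↑m + r).toNat ≤ 2*m := by omega
    have hsub : 2*m - (↑m + r).toNat = (↑m - r).toNat := by omega
    have := qb_mul (x := w) (2*m) ((↑m + r).toNat) hk
    rw [hsub] at this
    field_simp [P_ne_zero hw]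
    linear_combination -this
  have := hlim.congr' heq
  have hPP : Pinf / (Pinf * Pinf) = Pinf⁻¹ := by field_simp
  rwa [hPP] at this

/-! ## The finite Jacobi-type identity, specialized -/

lemma zpow_prod (hq0 : q ≠ 0) (n : ℕ) (a : ℕ → ℤ) :
    ∏ i ∈ range n, q ^ (a i) = q ^ (∑ i ∈ range n, a i) := by
  induction n with
  | zero => simp
  | succ n ih => rw [prod_range_succ, sum_range_succ, ih, zpow_add₀ hq0]

lemma sum_4k3 (m : ℕ) : ∑ j ∈ range m, (-(4*(j:ℤ)+3)) = -(2*(m:ℤ)^2 + m) := by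
  induction m with
  | zero => simp
  | succ m ih => rw [sum_range_succ, ih]; push_cast; ring

lemma finite_jtp (hq0 : q ≠ 0) (m : ℕ) :
    (∏ k ∈ range m, (1 + q ^ (4*k+3))) * (∏ k ∈ range m, (1 + q ^ (4*k+1)))
      = ∑ r ∈ Finset.Icc (-(m:ℤ)) (m:ℤ),
          qb (q^4) (2*m) ((↑m + r).toNat) * q ^ (2*r^2 - r) := by
  have hro := rothe (q^4) (q ^ ((1:ℤ) - 4*m)) (2*m)
  -- rewrite the product side
  have hL : ∏ k ∈ range (2*m), (1 + q ^ ((1:ℤ) - 4*m) * (q^4) ^ k)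
      = q ^ (-(2*(m:ℤ)^2 + m))
        * ((∏ j ∈ range m, (1 + q ^ (4*j+3))) * (∏ k ∈ range m, (1 + q ^ (4*k+1)))) := by
    have hf : ∀ k ∈ range (2*m), 1 + q ^ ((1:ℤ) - 4*m) * (q^4) ^ k
        = 1 + q ^ (4*(k:ℤ) + 1 - 4*m) := by
      intro k _
      congr 1
      rw [← pow_mul, ← zpow_natCast q (4*k), ← zpow_add₀ hq0]
      congr 1
      push_cast; ring
    rw [Finset.prod_congr rfl hf, two_mul, prod_range_add]
    have h2 : ∏ k ∈ range m, (1 + q ^ (4*((m+k : ℕ):ℤ) + 1 - 4*m))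
        = ∏ k ∈ range m, (1 + q ^ (4*k+1)) := by
      apply Finset.prod_congr rfl
      intro k _
      congr 1
      rw [← zpow_natCast q (4*k+1)]
      congr 1
      push_cast; ring
    have h1 : ∏ k ∈ range m, (1 + q ^ (4*(k:ℤ) + 1 - 4*m))
        = q ^ (-(2*(m:ℤ)^2 + m)) * ∏ j ∈ range m, (1 + q ^ (4*j+3)) := by
      rw [← Finset.prod_range_reflect (fun k => 1 + q ^ (4*(k:ℤ) + 1 - 4*m)) m]
      have hstep : ∀ j ∈ range m, 1 + q ^ (4*((m-1-j : ℕ):ℤ) + 1 - 4*m)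
          = q ^ (-(4*(j:ℤ)+3)) * (1 + q ^ (4*j+3)) := by
        intro j hj
        have hj' : j < m := mem_range.mp hj
        have hc : (4*((m-1-j : ℕ):ℤ) + 1 - 4*m) = -(4*(j:ℤ)+3) := by
          have : ((m-1-j : ℕ):ℤ) = (m:ℤ) - 1 - j := by omega
          rw [this]; ring
        rw [hc]
        calc 1 + q ^ (-(4*(j:ℤ)+3))
            = q ^ (-(4*(j:ℤ)+3)) * (1 + q ^ (((4*j+3 : ℕ) : ℤ))) := by
              rw [mul_add, mul_one, ← zpow_add₀ hq0]
              have he2 : (-(4*(j:ℤ)+3) + ((4*j+3 : ℕ) : ℤ)) = 0 := by push_cast; ring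
              rw [he2, zpow_zero, add_comm]
          _ = q ^ (-(4*(j:ℤ)+3)) * (1 + q ^ (4*j+3)) := by rw [zpow_natCast]
      rw [Finset.prod_congr rfl hstep, Finset.prod_mul_distrib, zpow_prod hq0, sum_4k3]
    rw [h1, h2, mul_assoc]
  -- rewrite the sum side
  have hR : q ^ ((2*(m:ℤ)^2+m))
        * (∑ n ∈ range (2*m+1), qb (q^4) (2*m) n * (q^4) ^ T n * (q ^ ((1:ℤ)-4*m)) ^ n)
      = ∑ r ∈ Finset.Icc (-(m:ℤ)) (m:ℤ),
          qb (q^4) (2*m) ((↑m + r).toNat) * q ^ (2*r^2 - r) := by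
    rw [Finset.mul_sum]
    refine Finset.sum_nbij' (fun n => (n:ℤ) - m) (fun r => ((m:ℤ) + r).toNat) ?_ ?_ ?_ ?_ ?_
    · intro n hn
      have := mem_range.mp hn
      simp only [Finset.mem_Icc]
      omega
    · intro r hr
      have := Finset.mem_Icc.mp hr
      simp only [mem_range]
      omega
    · intro n hn
      have := mem_range.mp hn
      show ((m:ℤ) + ((n:ℤ) - m)).toNat = n
      omega
    · intro r hr
      have := Finset.mem_Icc.mp hr
      show ((((m:ℤ) + r).toNat : ℕ) : ℤ) - m = r
      omega
    · intro n hn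
      have hn' := mem_range.mp hn
      have hNat : ((m:ℤ) + ((n:ℤ) - m)).toNat = n := by omega
      rw [hNat]
      have key : ∀ (a b c : ℤ) (X : ℂ), q^a * (X * q^b * q^c) = X * q^(a+b+c) := by
        intro a b c X
        rw [zpow_add₀ hq0, zpow_add₀ hq0]; ring
      rw [← pow_mul, ← zpow_natCast q (4 * T n), ← zpow_natCast (q ^ ((1:ℤ)-4*m)) n, ← zpow_mul,
        key]
      congr 1
      congr 1
      have htn := two_T n
      push_cast
      linear_combination 2 * htn
  calc (∏ k ∈ range m, (1 + q ^ (4*k+3))) * (∏ k ∈ range m, (1 + q ^ (4*k+1)))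
      = q ^ ((2*(m:ℤ)^2+m)) * (q ^ (-(2*(m:ℤ)^2 + m))
          * ((∏ k ∈ range m, (1 + q ^ (4*k+3))) * (∏ k ∈ range m, (1 + q ^ (4*k+1))))) := by
        rw [← mul_assoc, ← zpow_add₀ hq0,
          show (2*(m:ℤ)^2+m) + (-(2*(m:ℤ)^2 + m)) = 0 by ring, zpow_zero, one_mul]
    _ = q ^ ((2*(m:ℤ)^2+m))
        * (∑ n ∈ range (2*m+1), qb (q^4) (2*m) n * (q^4) ^ T n * (q ^ ((1:ℤ)-4*m)) ^ n) := by
        rw [← hL, hro]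
    _ = _ := hR

/-! ## Summability over ℤ -/

lemma summable_zpow_int {x : ℝ} (h0 : 0 < x) (h1 : x < 1) :
    Summable (fun r : ℤ => x ^ (2*r^2 - r)) := by
  have geom := summable_geometric_of_lt_one h0.le h1
  have key : ∀ g : ℕ → ℤ, (∀ n : ℕ, (n:ℤ) ≤ g n) → Summable (fun n : ℕ => x ^ (g n)) := by
    intro g hg
    apply Summable.of_nonneg_of_le (fun n => (zpow_pos h0 _).le) (fun n => ?_) geom
    calc x ^ (g n) ≤ x ^ ((n:ℕ):ℤ) := zpow_le_zpow_right_of_le_one₀ h0 h1.le (hg n)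
      _ = x ^ (n:ℕ) := zpow_natCast x n
  apply Summable.of_nat_of_neg
  · apply key
    intro n
    match n with
    | 0 => simp
    | k+1 => push_cast; nlinarith [sq_nonneg ((k:ℤ)), Int.natCast_nonneg k]
  · have := key (fun n : ℕ => 2*(-(n:ℤ))^2 - (-(n:ℤ))) (fun n => by push_cast; nlinarith [sq_nonneg ((n:ℤ)), Int.natCast_nonneg n])
    exact this

/-! ## The limit: Gauss's identity in product form -/

lemma key_limit {q : ℂ} (hq1 : ‖q‖ < 1) (hq0 : q ≠ 0) :
    (∑' r : ℤ, q ^ (2*r^2 - r))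
      = (∏' i : ℕ, (1 - (q^4) ^ (i+1)))
        * ((∏' k : ℕ, (1 + q ^ (4*k+3))) * (∏' k : ℕ, (1 + q ^ (4*k+1)))) := by
  have hx0 : 0 < ‖q‖ := norm_pos_iff.mpr hq0
  have hw : ‖q^4‖ < 1 := by
    rw [norm_pow]; exact pow_lt_one₀ (norm_nonneg q) hq1 (by norm_num)
  obtain ⟨K, hK⟩ := qb_bound hw
  obtain ⟨hPtend, hPne⟩ := P_tendsto hw
  set Pinf := ∏' i : ℕ, (1 - (q^4) ^ (i+1)) with hP
  set F : ℕ → ℤ → ℂ := fun m r =>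
    if r ∈ Finset.Icc (-(m:ℤ)) (m:ℤ) then qb (q^4) (2*m) ((↑m + r).toNat) * q ^ (2*r^2 - r)
    else 0 with hF
  have htan : Tendsto (fun m => ∑' r : ℤ, F m r) atTop
      (𝓝 (∑' r : ℤ, Pinf⁻¹ * q ^ (2*r^2-r))) := by
    apply tendsto_tsum_of_dominated_convergence
      (bound := fun r : ℤ => (max K 0) * ‖q‖ ^ (2*r^2-r))
      ((summable_zpow_int hx0 hq1).mul_left _)
    · intro r
      have hev : ∀ᶠ m : ℕ in atTop,
          qb (q^4) (2*m) ((↑m + r).toNat) * q ^ (2*r^2-r) = F m r := by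
        filter_upwards [eventually_ge_atTop r.natAbs] with m hm
        rw [hF]
        simp only
        rw [if_pos (Finset.mem_Icc.mpr ⟨by omega, by omega⟩)]
      exact Tendsto.congr' hev ((qb_tendsto hw r).mul_const _)
    · filter_upwards with m r
      rw [hF]
      simp only
      split_ifs with hr
      · rw [norm_mul, norm_zpow]
        apply mul_le_mul_of_nonneg_right ?_ (zpow_nonneg (norm_nonneg q) _)
        exact le_max_of_le_left (hK _ _ (by have := Finset.mem_Icc.mp hr; omega))
      · rw [norm_zero]
        positivity
  have hfin : ∀ m : ℕ, ∑' r : ℤ, F m r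
      = (∏ k ∈ range m, (1 + q ^ (4*k+3))) * (∏ k ∈ range m, (1 + q ^ (4*k+1))) := by
    intro m
    calc ∑' r : ℤ, F m r = ∑ r ∈ Finset.Icc (-(m:ℤ)) (m:ℤ), F m r :=
          tsum_eq_sum (fun b hb => by rw [hF]; simp only; rw [if_neg hb])
      _ = ∑ r ∈ Finset.Icc (-(m:ℤ)) (m:ℤ), qb (q^4) (2*m) ((↑m + r).toNat) * q ^ (2*r^2 - r) :=
          Finset.sum_congr rfl (fun r hr => by rw [hF]; simp only; rw [if_pos hr])
      _ = _ := (finite_jtp hq0 m).symm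
  have hlhs : Tendsto
      (fun m => (∏ k ∈ range m, (1 + q ^ (4*k+3))) * (∏ k ∈ range m, (1 + q ^ (4*k+1)))) atTop
      (𝓝 ((∏' k : ℕ, (1 + q ^ (4*k+3))) * (∏' k : ℕ, (1 + q ^ (4*k+1))))) :=
    ((nice_add hq1 (fun k => 4*k+3) (fun k => by show k + 1 ≤ 4*k+3; omega)).1.tendsto_prod_nat).mul
      ((nice_add hq1 (fun k => 4*k+1) (fun k => by show k + 1 ≤ 4*k+1; omega)).1.tendsto_prod_nat)
  have huniq := tendsto_nhds_unique (htan.congr hfin) hlhs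
  rw [tsum_mul_left] at huniq
  rw [← huniq, ← mul_assoc, mul_inv_cancel₀ hPne, one_mul]

/-! ## The theta sum as a sum over ℤ -/

def J : ℤ ≃ ℕ := (Equiv.neg ℤ).trans Equiv.intEquivNat

lemma hJT : ∀ r : ℤ, 2*r^2 - r = (T (J r + 1) : ℤ) := by
  intro r
  rcases r with n | n
  · match n with
    | 0 => decide
    | k+1 =>
      have hJ : J (Int.ofNat (k+1)) = 2*k+1 := by
        show Equiv.intEquivNat (-(Int.ofNat (k+1))) = 2*k+1
        have h : -(Int.ofNat (k+1)) = Int.negSucc k := rfl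
        rw [h]
        simp [Equiv.intEquivNat, Equiv.intEquivNatSumNat]
      rw [hJ]
      have h := two_T (2*k+1+1)
      have h2 : (2*(Int.ofNat (k+1) : ℤ)^2 - Int.ofNat (k+1)) * 2 = (T (2*k+1+1) : ℤ) * 2 := by
        rw [h]; simp only [Int.ofNat_eq_coe]; push_cast; ring
      linarith
  · have hJ : J (Int.negSucc n) = 2*(n+1) := by
      show Equiv.intEquivNat (-(Int.negSucc n)) = 2*(n+1)
      have h : -(Int.negSucc n) = Int.ofNat (n+1) := rfl
      rw [h]
      rfl
    rw [hJ]
    have h := two_T (2*(n+1)+1)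
    have h2 : (2*(Int.negSucc n : ℤ)^2 - Int.negSucc n) * 2 = (T (2*(n+1)+1) : ℤ) * 2 := by
      rw [h]
      rw [Int.negSucc_eq]
      push_cast; ring
    linarith

lemma Z_eq_psi {q : ℂ} :
    (∑' r : ℤ, q ^ (2*r^2-r)) = ∑' n : ℕ, q ^ (n*(n+1)/2) := by
  have h1 : ∀ r : ℤ, q ^ (2*r^2-r) = (fun n : ℕ => q ^ (n*(n+1)/2)) (J r) := by
    intro r
    simp only
    rw [tri_eq (J r), hJT r, zpow_natCast]
  rw [tsum_congr h1, J.tsum_eq (fun n : ℕ => q ^ (n*(n+1)/2))]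

lemma one_sub_ne {w : ℂ} (h : ‖w‖ < 1) : 1 - w ≠ 0 := by
  have := one_add_ne (w := -w) (by rwa [norm_neg])
  rwa [← sub_eq_add_neg] at this

lemma pow_factor_ne {q : ℂ} (hq1 : ‖q‖ < 1) (j : ℕ) (hj : j ≠ 0) : 1 - q ^ j ≠ 0 :=
  one_sub_ne (by rw [norm_pow]; exact pow_lt_one₀ (norm_nonneg q) hq1 hj)

/-! ## Main theorem, nonzero case -/

lemma main_ne_zero {q : ℂ} (hq1 : ‖q‖ < 1) (hq0 : q ≠ 0) :
    (∑' n : ℕ, q ^ (n*(n+1)/2))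
      = ∏' k : ℕ, (1 - q ^ (2*k+2)) / (1 - q ^ (2*k+1)) := by
  have hx1 : 0 < 1 - ‖q‖ := by linarith
  have hC1 := nice_add hq1 (fun k => 4*k+1) (fun k => by show k + 1 ≤ 4*k+1; omega)
  have hC3 := nice_add hq1 (fun k => 4*k+3) (fun k => by show k + 1 ≤ 4*k+3; omega)
  have hCf := nice_add hq1 (fun k => 2*k+1) (fun k => by show k + 1 ≤ 2*k+1; omega)
  have hB := nice_sub hq1 (fun k => 2*k+1) (fun k => by show k + 1 ≤ 2*k+1; omega)
  have hA := nice_sub hq1 (fun k => 2*k+2) (fun k => by show k + 1 ≤ 2*k+2; omega)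
  have hE2 := nice_sub hq1 (fun k => 4*k+2) (fun k => by show k + 1 ≤ 4*k+2; omega)
  have hD := nice_sub hq1 (fun k => 4*k+4) (fun k => by show k + 1 ≤ 4*k+4; omega)
  -- A = E2 * D
  have hfA : HasProd (fun k => 1 - q^(2*k+2)) ((∏' k : ℕ, (1 - q ^ (4*k+2))) * (∏' k : ℕ, (1 - q ^ (4*k+4)))) := by
    apply HasProd.even_mul_odd
    · have e1 : (fun k : ℕ => 1 - q ^ (4*k+2)) = (fun k : ℕ => 1 - q ^ (2*(2*k)+2)) := by
        funext k; congr 1; congr 1; omega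
      rw [← e1]; exact hE2.1
    · have e1 : (fun k : ℕ => 1 - q ^ (4*k+4)) = (fun k : ℕ => 1 - q ^ (2*(2*k+1)+2)) := by
        funext k; congr 1; congr 1; omega
      rw [← e1]; exact hD.1
  have hAeq : (∏' k : ℕ, (1 - q ^ (2*k+2)))
      = (∏' k : ℕ, (1 - q ^ (4*k+2))) * (∏' k : ℕ, (1 - q ^ (4*k+4))) := hA.1.unique hfA
  -- E2 = B * Cfull
  have hfE2 : HasProd (fun k => 1 - q^(4*k+2))
      ((∏' k : ℕ, (1 - q ^ (2*k+1))) * (∏' k : ℕ, (1 + q ^ (2*k+1)))) := by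
    have e1 : (fun k : ℕ => (1 - q^(2*k+1)) * (1 + q^(2*k+1))) = (fun k : ℕ => 1 - q ^ (4*k+2)) := by
      funext k
      have h2 : (q^(2*k+1))^2 = q^(4*k+2) := by rw [← pow_mul]; congr 1; omega
      linear_combination -h2
    rw [← e1]
    exact hB.1.mul hCf.1
  have hE2eq : (∏' k : ℕ, (1 - q ^ (4*k+2)))
      = (∏' k : ℕ, (1 - q ^ (2*k+1))) * (∏' k : ℕ, (1 + q ^ (2*k+1))) := hE2.1.unique hfE2
  -- Cfull = C1 * C3
  have hfC : HasProd (fun k => 1 + q^(2*k+1))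
      ((∏' k : ℕ, (1 + q ^ (4*k+1))) * (∏' k : ℕ, (1 + q ^ (4*k+3)))) := by
    apply HasProd.even_mul_odd
    · have e1 : (fun k : ℕ => 1 + q ^ (4*k+1)) = (fun k : ℕ => 1 + q ^ (2*(2*k)+1)) := by
        funext k; congr 1; congr 1; omega
      rw [← e1]; exact hC1.1
    · have e1 : (fun k : ℕ => 1 + q ^ (4*k+3)) = (fun k : ℕ => 1 + q ^ (2*(2*k+1)+1)) := by
        funext k; congr 1; congr 1; omega
      rw [← e1]; exact hC3.1
  have hCeq : (∏' k : ℕ, (1 + q ^ (2*k+1)))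
      = (∏' k : ℕ, (1 + q ^ (4*k+1))) * (∏' k : ℕ, (1 + q ^ (4*k+3))) := hCf.1.unique hfC
  -- the target product
  have hgne : ∀ k : ℕ, 1 - q ^ (2*k+1) ≠ 0 := fun k => pow_factor_ne hq1 _ (by omega)
  have hfne : ∀ k : ℕ, 1 - q ^ (2*k+2) ≠ 0 := fun k => pow_factor_ne hq1 _ (by omega)
  have hTgt : HasProd (fun k => (1 - q^(2*k+2)) / (1 - q^(2*k+1)))
      (∏' k : ℕ, ((1 - q^(2*k+2)) / (1 - q^(2*k+1)))) := by
    have e1 : (fun k : ℕ => 1 + ((1 - q^(2*k+2)) / (1 - q^(2*k+1)) - 1))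
        = (fun k : ℕ => (1 - q^(2*k+2)) / (1 - q^(2*k+1))) := by
      funext k; ring
    have := nice (a := fun k => (1 - q^(2*k+2)) / (1 - q^(2*k+1)) - 1) ?_ ?_
    · rw [e1] at this
      exact this.1
    · intro k
      rw [show (1 : ℂ) + ((1 - q^(2*k+2)) / (1 - q^(2*k+1)) - 1) = (1 - q^(2*k+2)) / (1 - q^(2*k+1)) by ring]
      exact div_ne_zero (hfne k) (hgne k)
    · -- summability
      have hble : ∀ k : ℕ, ‖(1 - q^(2*k+2)) / (1 - q^(2*k+1)) - 1‖ ≤ (2 * (1 - ‖q‖)⁻¹) * ‖q‖ ^ k := by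
        intro k
        have hnum : (1 - q^(2*k+2)) / (1 - q^(2*k+1)) - 1
            = (q^(2*k+1) - q^(2*k+2)) / (1 - q^(2*k+1)) := by
          rw [div_sub_one (hgne k)]
          congr 1
          ring
        rw [hnum, norm_div]
        have hden : 1 - ‖q‖ ≤ ‖1 - q^(2*k+1)‖ := by
          calc 1 - ‖q‖ ≤ 1 - ‖q‖^(2*k+1) := by
                have := pow_le_of_le_one (norm_nonneg q) hq1.le (show 2*k+1 ≠ 0 by omega)
                linarith
            _ = ‖(1:ℂ)‖ - ‖q^(2*k+1)‖ := by rw [norm_one, norm_pow]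
            _ ≤ ‖1 - q^(2*k+1)‖ := norm_sub_norm_le _ _
        have hnum2 : ‖q^(2*k+1) - q^(2*k+2)‖ ≤ 2 * ‖q‖ ^ k := by
          calc ‖q^(2*k+1) - q^(2*k+2)‖ ≤ ‖q^(2*k+1)‖ + ‖q^(2*k+2)‖ := norm_sub_le _ _
            _ = ‖q‖^(2*k+1) + ‖q‖^(2*k+2) := by rw [norm_pow, norm_pow]
            _ ≤ ‖q‖^k + ‖q‖^k :=
                add_le_add (pow_le_pow_of_le_one (norm_nonneg q) hq1.le (by omega))
                  (pow_le_pow_of_le_one (norm_nonneg q) hq1.le (by omega))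
            _ = 2 * ‖q‖ ^ k := by ring
        calc ‖q^(2*k+1) - q^(2*k+2)‖ / ‖1 - q^(2*k+1)‖
            ≤ (2 * ‖q‖ ^ k) / (1 - ‖q‖) := by
              apply div_le_div₀ (by positivity) hnum2 hx1 hden
          _ = 2 * (1 - ‖q‖)⁻¹ * ‖q‖ ^ k := by ring
      exact Summable.of_nonneg_of_le (fun k => norm_nonneg _) hble
        ((summable_geometric_of_lt_one (norm_nonneg q) hq1).mul_left _)
  -- Tgt * B = A
  have hTB : HasProd (fun k => (1 - q^(2*k+2)))
      ((∏' k : ℕ, ((1 - q^(2*k+2)) / (1 - q^(2*k+1)))) * (∏' k : ℕ, (1 - q ^ (2*k+1)))) := by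
    have e1 : (fun k : ℕ => ((1 - q^(2*k+2)) / (1 - q^(2*k+1))) * (1 - q^(2*k+1)))
        = (fun k : ℕ => 1 - q^(2*k+2)) := by
      funext k
      exact div_mul_cancel₀ _ (hgne k)
    rw [← e1]
    exact hTgt.mul hB.1
  have hTBeq : (∏' k : ℕ, (1 - q ^ (2*k+2)))
      = (∏' k : ℕ, ((1 - q^(2*k+2)) / (1 - q^(2*k+1)))) * (∏' k : ℕ, (1 - q ^ (2*k+1))) :=
    hA.1.unique hTB
  -- Pinf = D
  have hPD : (∏' i : ℕ, (1 - (q^4) ^ (i+1))) = ∏' k : ℕ, (1 - q ^ (4*k+4)) := by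
    apply tprod_congr
    intro i
    congr 1
    rw [← pow_mul, show 4*(i+1) = 4*i+4 from by omega]
  -- put it all together
  have hkey := key_limit hq1 hq0
  rw [hPD] at hkey
  have hψ : (∑' n : ℕ, q ^ (n*(n+1)/2))
      = (∏' k : ℕ, (1 - q ^ (4*k+4))) * ((∏' k : ℕ, (1 + q ^ (4*k+3))) * (∏' k : ℕ, (1 + q ^ (4*k+1)))) := by
    rw [← Z_eq_psi]
    exact hkey
  rw [hψ]
  -- from hTBeq, hAeq, hE2eq, hCeq deduce the claim, cancelling B ≠ 0
  have hBne := hB.2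
  apply mul_right_cancel₀ hBne
  rw [← hTBeq, hAeq, hE2eq, hCeq]
  ring

end PsiAux

/-- Ramanujan's theta function `ψ(q) = ∑_{n ≥ 0} q^{n(n+1)/2}`. -/
noncomputable def psiC (q : ℂ) : ℂ := ∑' n : ℕ, q ^ (n * (n + 1) / 2)

theorem psi_product (q : ℂ) (hq : ‖q‖ < 1) :
    psiC q = ∏' k : ℕ, (1 - q ^ (2 * k + 2)) / (1 - q ^ (2 * k + 1)) := by
  by_cases hq0 : q = 0
  · subst hq0
    rw [psiC]
    have h1 : ∑' n : ℕ, (0:ℂ) ^ (n * (n + 1) / 2) = 1 := by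
      rw [tsum_eq_single 0 ?_]
      · norm_num
      · intro b hb
        rw [PsiAux.tri_eq]
        apply zero_pow
        show PsiAux.T (b+1) ≠ 0
        have hb1 : 1 ≤ b := Nat.one_le_iff_ne_zero.mpr hb
        have hTb : PsiAux.T (b+1) = PsiAux.T b + b := rfl
        omega
    rw [h1]
    have h2 : ∀ k : ℕ, (1 - (0:ℂ) ^ (2*k+2)) / (1 - 0 ^ (2*k+1)) = 1 := by
      intro k
      rw [zero_pow (by omega : 2*k+2 ≠ 0), zero_pow (by omega : 2*k+1 ≠ 0)]
      norm_num
    rw [tprod_congr h2, tprod_one]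
  · rw [psiC]
    exact PsiAux.main_ne_zero hq hq0
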